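/- Let C be a separated bornological algebra and τ_C: TC → C the canonical projection from the analytic tensor algebra. Then τ_C preserves spectral radii: ρ(τ_C(S); C) = ρ(S; TC) for every small subset S ⊂ TC. -/

import Mathlib

/-!
STATEMENT 16: For a separated bornological algebra `C`, the canonical projection
`τ_C : 𝒯C → C` from the analytic tensor algebra preserves spectral radii:
`ρ(τ_C(S); C) = ρ(S; 𝒯C)` for every small `S ⊆ 𝒯C`.

The analytic tensor algebra is realized, following Cuntz–Quillen, as the (non-unital
part of the) tensor algebra `T(C)`, with `x₀ dx₁ ⋯ dx₂ₙ` corresponding to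
`x₀ ⊗ ω(x₁,x₂) ⊗ ⋯ ⊗ ω(x₂ₙ₋₁, x₂ₙ)` where `ω(x,y) = x ⊗ y − xy` is the curvature.
Its analytic bornology is generated by the disked hulls of the sets `[S](dSdS)^∞`.
-/

open Bornology Set
open scoped ENNReal Pointwise

/-- `setPow S n` is the set of `(n+1)`-fold products of elements of `S`. -/
def setPow {A : Type} [Mul A] (S : Set A) : ℕ → Set A
  | 0 => S
  | n + 1 => setPow S n * S

/-- The multiplicative closure `S^∞ = ⋃_{n ≥ 1} S^n`. -/
def mulClosure {A : Type} [Mul A] (S : Set A) : Set A := ⋃ n, setPow S n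

/-- A disk: an absolutely convex subset. -/
def IsDisk {V : Type} [AddCommGroup V] [Module ℝ V] (S : Set V) : Prop :=
  Balanced ℝ S ∧ Convex ℝ S

/-- The disked hull. -/
def dhull {V : Type} [AddCommGroup V] [Module ℝ V] (S : Set V) : Set V :=
  convexHull ℝ (balancedHull ℝ S)

/-- Spectral radius with respect to a bornology given as a predicate `small`. -/
noncomputable def specRadP {A : Type} [Mul A] [SMul ℝ A] (small : Set A → Prop)
    (S : Set A) : ℝ≥0∞ :=
  sInf {r : ℝ≥0∞ | ∃ t : ℝ, 0 < t ∧ r = ENNReal.ofReal t ∧ small (mulClosure (t⁻¹ • S))}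

def SeparatedBorn (A : Type) [AddCommGroup A] [Module ℝ A] [Bornology A] : Prop :=
  ∀ W : Submodule ℝ A, Bornology.IsBounded (W : Set A) → W = ⊥

variable (C : Type) [NonUnitalRing C] [Module ℝ C]
  [IsScalarTower ℝ C C] [SMulCommClass ℝ C C] [Bornology C]

/-- The canonical projection `τ_C : T(C) → C` induced by the identity of `C`
(constructed through the unitization of `C`). -/
noncomputable def tauC : TensorAlgebra ℝ C →ₗ[ℝ] C :=
  (Unitization.sndHom ℝ ℝ C).comp
    (TensorAlgebra.lift ℝ (Unitization.inrHom ℝ ℝ C)).toLinearMap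

/-- The set of curvatures `ω(S,S) = {ι(x)ι(y) − ι(xy) | x, y ∈ S}`, corresponding to
`dS dS`. -/
def curvSet (S : Set C) : Set (TensorAlgebra ℝ C) :=
  {w | ∃ x ∈ S, ∃ y ∈ S, w =
    TensorAlgebra.ι ℝ x * TensorAlgebra.ι ℝ y - TensorAlgebra.ι ℝ (x * y)}

/-- The generating set `[S](dSdS)^∞ = S ∪ ⋃ₙ (S·ω(S,S)ⁿ ∪ ω(S,S)ⁿ)` of the analytic
bornology of the analytic tensor algebra `𝒯C`. -/
def anSet (S : Set C) : Set (TensorAlgebra ℝ C) :=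
  (TensorAlgebra.ι ℝ '' S) ∪
    ⋃ n : ℕ, ((TensorAlgebra.ι ℝ '' S) * setPow (curvSet C S) n ∪ setPow (curvSet C S) n)

/-- The analytic bornology of the analytic tensor algebra `𝒯C`: a set is small iff it
is absorbed by the disked hull of some set `[S](dSdS)^∞` with `S ⊆ C` small. -/
def SmallTC (U : Set (TensorAlgebra ℝ C)) : Prop :=
  ∃ (S : Set C) (c : ℝ), IsBounded S ∧ 0 < c ∧ U ⊆ c • dhull (anSet C S)


section AbsCo

variable {V : Type} [AddCommGroup V] [Module ℝ V]
variable {W : Type} [AddCommGroup W] [Module ℝ W]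

/-- Absolutely convex combinations of elements of `X` with total coefficient mass `≤ c`. -/
def absCo (c : ℝ) (X : Set V) : Set V :=
  {x | ∃ l : List (ℝ × V), (∀ p ∈ l, p.2 ∈ X) ∧ (l.map (fun p => |p.1|)).sum ≤ c ∧
        x = (l.map (fun p => p.1 • p.2)).sum}

theorem absCo_mono {c c' : ℝ} {X X' : Set V} (hc : c ≤ c') (hX : X ⊆ X') :
    absCo c X ⊆ absCo c' X' := by
  rintro x ⟨l, h1, h2, h3⟩
  exact ⟨l, fun p hp => hX (h1 p hp), h2.trans hc, h3⟩

theorem mem_absCo_self {X : Set V} {x : V} (hx : x ∈ X) : x ∈ absCo 1 X :=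
  ⟨[(1, x)], by simpa using hx, by simp, by simp⟩

theorem zero_mem_absCo {c : ℝ} {X : Set V} (hc : 0 ≤ c) : (0 : V) ∈ absCo c X :=
  ⟨[], by simp, by simpa using hc, by simp⟩

theorem absCo_nonneg {c : ℝ} {X : Set V} {x : V} (hx : x ∈ absCo c X) : 0 ≤ c := by
  obtain ⟨l, _, h2, _⟩ := hx
  refine le_trans (List.sum_nonneg ?_) h2
  intro a ha
  obtain ⟨p, _, rfl⟩ := List.mem_map.1 ha
  exact abs_nonneg _

theorem add_mem_absCo {c d : ℝ} {X : Set V} {x y : V}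
    (hx : x ∈ absCo c X) (hy : y ∈ absCo d X) : x + y ∈ absCo (c + d) X := by
  obtain ⟨l, h1, h2, h3⟩ := hx
  obtain ⟨m, g1, g2, g3⟩ := hy
  refine ⟨l ++ m, ?_, ?_, ?_⟩
  · intro p hp; rcases List.mem_append.1 hp with h | h
    exacts [h1 p h, g1 p h]
  · rw [List.map_append, List.sum_append]; exact add_le_add h2 g2
  · rw [List.map_append, List.sum_append, h3, g3]

theorem smul_mem_absCo {c : ℝ} {X : Set V} {x : V} (r : ℝ) (hx : x ∈ absCo c X) :
    r • x ∈ absCo (|r| * c) X := by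
  obtain ⟨l, h1, h2, h3⟩ := hx
  refine ⟨l.map (fun p => (r * p.1, p.2)), ?_, ?_, ?_⟩
  · intro p hp
    obtain ⟨q, hq, rfl⟩ := List.mem_map.1 hp
    exact h1 q hq
  · rw [List.map_map]
    have : ((fun p : ℝ × V => |p.1|) ∘ fun p : ℝ × V => (r * p.1, p.2)) =
        fun p : ℝ × V => |r| * |p.1| := by
      funext p; simp [abs_mul]
    rw [this]
    have e1 : (l.map fun p : ℝ × V => |r| * |p.1|).sum = |r| * (l.map fun p : ℝ × V => |p.1|).sum := by
      rw [← List.sum_map_mul_left]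
    rw [e1]
    exact mul_le_mul_of_nonneg_left h2 (abs_nonneg r)
  · rw [h3, List.map_map]
    have : ((fun p : ℝ × V => p.1 • p.2) ∘ fun p : ℝ × V => (r * p.1, p.2)) =
        fun p : ℝ × V => (r * p.1) • p.2 := rfl
    rw [this]
    have e2 : ∀ m : List (ℝ × V),
        ((m.map fun p : ℝ × V => (r * p.1) • p.2)).sum = r • (m.map fun p : ℝ × V => p.1 • p.2).sum := by
      intro m
      induction m with
      | nil => simp
      | cons q t ih => rw [List.map_cons, List.map_cons, List.sum_cons, List.sum_cons, ih, smul_add, mul_smul]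
    exact (e2 l).symm

theorem sum_list_mem_absCo {d : ℝ} {Y : Set W} (hd : 0 ≤ d) (l : List (ℝ × W))
    (h : ∀ p ∈ l, p.2 ∈ absCo d Y) :
    (l.map (fun p => p.1 • p.2)).sum ∈ absCo ((l.map (fun p => |p.1|)).sum * d) Y := by
  induction l with
  | nil => simpa using zero_mem_absCo le_rfl
  | cons q t ih =>
    simp only [List.map_cons, List.sum_cons, add_mul]
    exact add_mem_absCo (smul_mem_absCo q.1 (h q (by simp)))
      (ih (fun p hp => h p (List.mem_cons_of_mem _ hp)))

/-- Mapping lemma: applying a linear map pointwise. -/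
theorem absCo_map {c d : ℝ} {X : Set V} {Y : Set W} (F : V →ₗ[ℝ] W) (hd : 0 ≤ d)
    (hF : ∀ x ∈ X, F x ∈ absCo d Y) {x : V} (hx : x ∈ absCo c X) :
    F x ∈ absCo (c * d) Y := by
  obtain ⟨l, h1, h2, h3⟩ := hx
  have key : F x = ((l.map (fun p => (p.1, F p.2))).map (fun p => p.1 • p.2)).sum := by
    rw [h3, List.map_map, map_list_sum, List.map_map]
    congr 1
    apply List.map_congr_left
    intro p _
    simp
  rw [key]
  have := sum_list_mem_absCo hd (l.map (fun p => (p.1, F p.2)))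
    (by intro p hp
        obtain ⟨q, hq, rfl⟩ := List.mem_map.1 hp
        exact hF q.2 (h1 q hq))
  refine absCo_mono ?_ (subset_refl _) this
  have : ((l.map fun p : ℝ × V => (p.1, F p.2)).map fun p : ℝ × W => |p.1|).sum =
      (l.map fun p : ℝ × V => |p.1|).sum := by
    rw [List.map_map]; rfl
  rw [this]
  exact mul_le_mul_of_nonneg_right h2 hd

theorem absCo_trans {c d : ℝ} {X Y : Set V} (hd : 0 ≤ d) (hXY : X ⊆ absCo d Y) {x : V}
    (hx : x ∈ absCo c X) : x ∈ absCo (c * d) Y := by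
  have := absCo_map (LinearMap.id (R := ℝ) (M := V)) hd (fun z hz => hXY hz) hx
  simpa using this

end AbsCo

section Hulls

variable {V : Type} [AddCommGroup V] [Module ℝ V]

theorem list_smul_coeff (r : ℝ) (l : List (ℝ × V)) :
    (l.map (fun p => (r * p.1) • p.2)).sum = r • (l.map (fun p => p.1 • p.2)).sum := by
  induction l with
  | nil => simp
  | cons q t ih =>
    rw [List.map_cons, List.map_cons, List.sum_cons, List.sum_cons, ih, smul_add, mul_smul]

theorem sum_finset_mem_absCo {ι : Type} {X : Set V} (t : Finset ι) (f : ι → V) (cf : ι → ℝ)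
    (h : ∀ i ∈ t, f i ∈ absCo (cf i) X) :
    (∑ i ∈ t, f i) ∈ absCo (∑ i ∈ t, cf i) X := by
  classical
  induction t using Finset.induction with
  | empty => simpa using zero_mem_absCo le_rfl
  | insert _ _ hnot ih =>
    rw [Finset.sum_insert hnot, Finset.sum_insert hnot]
    exact add_mem_absCo (h _ (Finset.mem_insert_self _ _))
      (ih fun i hi => h i (Finset.mem_insert_of_mem hi))

theorem dhull_subset_absCo (X : Set V) : dhull X ⊆ absCo 1 X := by
  intro x hx
  rw [dhull, convexHull_eq] at hx
  obtain ⟨ι', t, w, z, hw, hw1, hz, hx⟩ := hx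
  rw [Finset.centerMass_eq_of_sum_1 _ _ hw1] at hx
  have key : ∀ i ∈ t, w i • z i ∈ absCo (w i) X := by
    intro i hi
    obtain ⟨r, hr, y, hy, hzy⟩ : ∃ r : ℝ, ‖r‖ ≤ 1 ∧ ∃ y ∈ X, r • y = z i := by
      have := hz i hi
      rw [mem_balancedHull_iff] at this
      obtain ⟨r, hr, hmem⟩ := this
      obtain ⟨y, hy, hry⟩ := hmem
      exact ⟨r, hr, y, hy, hry⟩
    have : w i • z i = (w i * r) • y := by rw [← hzy, smul_smul]
    rw [this]
    have h1 : (w i * r) • y ∈ absCo (|w i * r| * 1) X :=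
      smul_mem_absCo _ (mem_absCo_self hy)
    refine absCo_mono ?_ (subset_refl _) h1
    rw [mul_one, abs_mul]
    calc |w i| * |r| ≤ |w i| * 1 := by
          apply mul_le_mul_of_nonneg_left _ (abs_nonneg _)
          simpa [Real.norm_eq_abs] using hr
      _ = w i := by rw [mul_one, abs_of_nonneg (hw i hi)]
  have := sum_finset_mem_absCo t _ _ key
  rw [hw1] at this
  rwa [hx] at this

theorem zero_mem_dhull {X : Set V} (hX : X.Nonempty) : (0 : V) ∈ dhull X := by
  obtain ⟨x, hx⟩ := hX
  apply subset_convexHull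
  rw [mem_balancedHull_iff]
  exact ⟨0, by simp, ⟨x, hx, by simp⟩⟩

theorem dhull_balanced (X : Set V) : Balanced ℝ (dhull X) :=
  (balancedHull.balanced X).convexHull

theorem dhull_convex (X : Set V) : Convex ℝ (dhull X) := convex_convexHull _ _

theorem dhull_mono {X Y : Set V} (h : X ⊆ Y) : dhull X ⊆ dhull Y :=
  convexHull_mono (balancedHull_mono h)

theorem subset_dhull {X : Set V} : X ⊆ dhull X :=
  (subset_balancedHull ℝ).trans (subset_convexHull _ _)

/-- Combination of two points of a balanced convex set with total mass ≤ 1 stays inside. -/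
theorem combo_mem_dhull {X : Set V} {u v : V} {a s : ℝ} (hu : u ∈ dhull X) (hv : v ∈ dhull X)
    (ha : 0 ≤ a) (hs : 0 ≤ s) (has : a + s ≤ 1) : a • u + s • v ∈ dhull X := by
  rcases eq_or_lt_of_le (by positivity : (0:ℝ) ≤ a + s) with h0 | hpos
  · have ha0 : a = 0 := by linarith [abs_nonneg a]
    have hs0 : s = 0 := by linarith
    rw [ha0, hs0]
    have := (dhull_balanced X).smul_mem (a := (0:ℝ)) (by simp) hu
    simpa using this
  · set c' := a + s with hc'
    have h1 : a • u + s • v = c' • ((a / c') • u + (s / c') • v) := by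
      rw [smul_add, smul_smul, smul_smul, mul_div_cancel₀ _ (ne_of_gt hpos),
        mul_div_cancel₀ _ (ne_of_gt hpos)]
    rw [h1]
    have h2 : (a / c') • u + (s / c') • v ∈ dhull X := by
      apply dhull_convex X hu hv (by positivity) (by positivity)
      field_simp
      exact hc'.symm
    exact (dhull_balanced X).smul_mem (by rw [Real.norm_eq_abs, abs_of_pos hpos]; exact has) h2

theorem abs_sum_zero_imp {l : List (ℝ × V)} (h : (l.map (fun p => |p.1|)).sum ≤ 0) :
    (l.map (fun p => p.1 • p.2)).sum = 0 := by
  induction l with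
  | nil => simp
  | cons q t ih =>
    rw [List.map_cons, List.sum_cons] at h
    have h1 : (0:ℝ) ≤ (t.map (fun p => |p.1|)).sum := by
      apply List.sum_nonneg
      intro a ha
      obtain ⟨p, _, rfl⟩ := List.mem_map.1 ha
      exact abs_nonneg _
    have hq : |q.1| = 0 := le_antisymm (by linarith [abs_nonneg q.1]) (abs_nonneg q.1)
    rw [List.map_cons, List.sum_cons, ih (by linarith), abs_eq_zero.1 hq]
    simp

theorem absCo_one_subset_dhull {X : Set V} (h0 : (0:V) ∈ X) : absCo 1 X ⊆ dhull X := by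
  suffices h : ∀ (n : ℕ) (l : List (ℝ × V)), l.length = n → (∀ p ∈ l, p.2 ∈ X) →
      (l.map (fun p => |p.1|)).sum ≤ 1 → (l.map (fun p => p.1 • p.2)).sum ∈ dhull X by
    rintro x ⟨l, h1, h2, rfl⟩
    exact h l.length l rfl h1 h2
  intro n
  induction n with
  | zero =>
    intro l hlen _ _
    rw [List.length_eq_zero_iff] at hlen
    subst hlen
    simpa using zero_mem_dhull ⟨0, h0⟩
  | succ n ih =>
    rintro (_ | ⟨q, t⟩) hlen h1 h2
    · simp at hlen
    rw [List.map_cons, List.sum_cons] at h2 ⊢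
    have hsnn : (0:ℝ) ≤ (t.map (fun p => |p.1|)).sum := by
      apply List.sum_nonneg
      intro a ha
      obtain ⟨p, _, rfl⟩ := List.mem_map.1 ha
      exact abs_nonneg _
    set s := (t.map (fun p => |p.1|)).sum with hs
    rcases eq_or_lt_of_le hsnn with hz | hpos
    · rw [abs_sum_zero_imp (le_of_eq hz.symm), add_zero]
      exact (dhull_balanced X).smul_mem
        (by rw [Real.norm_eq_abs]; linarith) (subset_dhull (h1 q (by simp)))
    · -- rescale the tail
      have htail : ((t.map (fun p => (s⁻¹ * p.1, p.2))).map (fun p => p.1 • p.2)).sum ∈ dhull X := by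
        apply ih
        · simp only [List.length_map]
          simpa using hlen
        · intro p hp
          obtain ⟨p', hp', rfl⟩ := List.mem_map.1 hp
          exact h1 p' (List.mem_cons_of_mem _ hp')
        · rw [List.map_map]
          have : ((fun p : ℝ × V => |p.1|) ∘ fun p : ℝ × V => (s⁻¹ * p.1, p.2)) =
              fun p : ℝ × V => s⁻¹ * |p.1| := by
            funext p; simp [abs_mul, abs_of_pos (inv_pos.2 hpos)]
          rw [this, List.sum_map_mul_left t (fun p : ℝ × V => |p.1|) s⁻¹, ← hs,
            inv_mul_cancel₀ (ne_of_gt hpos)]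
      have hrw : ((t.map (fun p => (s⁻¹ * p.1, p.2))).map (fun p => p.1 • p.2)).sum
          = s⁻¹ • (t.map (fun p => p.1 • p.2)).sum := by
        rw [List.map_map]
        exact list_smul_coeff s⁻¹ t
      rw [hrw] at htail
      have hq : q.1 • q.2 = |q.1| • ((SignType.sign q.1 : ℝ) • q.2) := by
        rw [smul_smul, abs_mul_sign q.1]
      have hu : ((SignType.sign q.1 : ℝ) • q.2) ∈ dhull X := by
        apply (dhull_balanced X).smul_mem _ (subset_dhull (h1 q (by simp)))
        rw [Real.norm_eq_abs]
        rcases lt_trichotomy q.1 0 with h | h | h <;> simp [h]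
      have hfin := combo_mem_dhull hu htail (abs_nonneg q.1) (le_of_lt hpos) h2
      rw [hq]
      convert hfin using 2
      rw [smul_smul, mul_inv_cancel₀ (ne_of_gt hpos), one_smul]

theorem absCo_subset_smul_dhull {X : Set V} {c : ℝ} (hc : 0 < c) (h0 : (0:V) ∈ X) :
    absCo c X ⊆ c • dhull X := by
  rintro x hx
  obtain ⟨l, h1, h2, rfl⟩ := hx
  refine ⟨c⁻¹ • (l.map (fun p => p.1 • p.2)).sum, ?_, smul_inv_smul₀ (ne_of_gt hc) _⟩
  apply absCo_one_subset_dhull h0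
  refine ⟨l.map (fun p => (c⁻¹ * p.1, p.2)), ?_, ?_, ?_⟩
  · intro p hp
    obtain ⟨p', hp', rfl⟩ := List.mem_map.1 hp
    exact h1 p' hp'
  · rw [List.map_map]
    have : ((fun p : ℝ × V => |p.1|) ∘ fun p : ℝ × V => (c⁻¹ * p.1, p.2)) =
        fun p : ℝ × V => c⁻¹ * |p.1| := by
      funext p; simp [abs_mul, abs_of_pos (inv_pos.2 hc)]
    rw [this, List.sum_map_mul_left l (fun p : ℝ × V => |p.1|) c⁻¹]
    calc (c⁻¹ * (l.map fun p : ℝ × V => |p.1|).sum) ≤ c⁻¹ * c :=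
          mul_le_mul_of_nonneg_left h2 (le_of_lt (inv_pos.2 hc))
      _ = 1 := inv_mul_cancel₀ (ne_of_gt hc)
  · rw [List.map_map]
    exact (list_smul_coeff c⁻¹ l).symm

end Hulls

section SetAlg

variable {M : Type} [Semigroup M]

theorem setPow_succ_left (X : Set M) (n : ℕ) : setPow X (n+1) = X * setPow X n := by
  induction n with
  | zero => rfl
  | succ n ih =>
    calc setPow X (n+2) = setPow X (n+1) * X := rfl
      _ = (X * setPow X n) * X := by rw [ih]
      _ = X * (setPow X n * X) := mul_assoc _ _ _

theorem mem_setPow_mul {X : Set M} {x y : M} {n m : ℕ}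
    (hx : x ∈ setPow X n) (hy : y ∈ setPow X m) : x * y ∈ setPow X (n + m + 1) := by
  induction m generalizing y with
  | zero => exact Set.mul_mem_mul hx hy
  | succ m ih =>
    obtain ⟨y', hy', z, hz, rfl⟩ := hy
    have h2 : (x * y') * z ∈ setPow X (n + m + 1) * X := Set.mul_mem_mul (ih hy') hz
    have : x * (y' * z) = (x * y') * z := (mul_assoc _ _ _).symm
    rw [this]
    exact h2

theorem subset_mulClosure (X : Set M) : X ⊆ mulClosure X := fun x hx => Set.mem_iUnion.2 ⟨0, hx⟩

theorem mulClosure_mul_self {X : Set M} {x y : M}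
    (hx : x ∈ mulClosure X) (hy : y ∈ mulClosure X) : x * y ∈ mulClosure X := by
  obtain ⟨n, hn⟩ := Set.mem_iUnion.1 hx
  obtain ⟨m, hm⟩ := Set.mem_iUnion.1 hy
  exact Set.mem_iUnion.2 ⟨n + m + 1, mem_setPow_mul hn hm⟩

end SetAlg

section SetSmul

variable {A : Type} [Ring A] [Algebra ℝ A]

theorem smul_set_mul_smul_set (r s : ℝ) (X Y : Set A) : (r • X) * (s • Y) = (r*s) • (X*Y) := by
  ext z
  constructor
  · rintro ⟨x, ⟨x', hx', rfl⟩, y, ⟨y', hy', rfl⟩, rfl⟩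
    exact ⟨x' * y', Set.mul_mem_mul hx' hy', by
      show (r * s) • (x' * y') = (r • x') * (s • y')
      rw [smul_mul_smul_comm]⟩
  · rintro ⟨w, ⟨x, hx, y, hy, rfl⟩, rfl⟩
    refine ⟨r • x, ⟨x, hx, rfl⟩, s • y, ⟨y, hy, rfl⟩, ?_⟩
    show (r • x) * (s • y) = (r * s) • (x * y)
    rw [smul_mul_smul_comm]

theorem setPow_smul_set (r : ℝ) (X : Set A) (n : ℕ) :
    setPow (r • X) n = r^(n+1) • setPow X n := by
  induction n with
  | zero => show r • X = r^1 • X; rw [pow_one]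
  | succ n ih =>
    calc setPow (r • X) (n+1) = setPow (r • X) n * (r • X) := rfl
      _ = (r^(n+1) • setPow X n) * (r • X) := by rw [ih]
      _ = (r^(n+1) * r) • (setPow X n * X) := smul_set_mul_smul_set _ _ _ _
      _ = r^(n+2) • setPow X (n+1) := by rw [← pow_succ]; rfl

theorem smul_smul_set (a b : ℝ) (X : Set A) : a • (b • X) = (a*b) • X := by
  ext z
  constructor
  · rintro ⟨y, ⟨x, hx, rfl⟩, rfl⟩
    exact ⟨x, hx, (smul_smul a b x).symm⟩
  · rintro ⟨x, hx, rfl⟩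
    exact ⟨b • x, ⟨x, hx, rfl⟩, smul_smul a b x⟩

theorem absCo_mul {X Y : Set A} {c d : ℝ} {x y : A}
    (hx : x ∈ absCo c X) (hy : y ∈ absCo d Y) : x * y ∈ absCo (c*d) (X*Y) := by
  have hd : 0 ≤ d := absCo_nonneg hy
  have step1 : ∀ x₀ ∈ X, x₀ * y ∈ absCo d (X*Y) := by
    intro x₀ hx₀
    have := absCo_map (LinearMap.mulLeft ℝ x₀) zero_le_one
      (fun z hz => mem_absCo_self (Set.mul_mem_mul hx₀ hz)) hy
    simpa using this
  have := absCo_map (LinearMap.mulRight ℝ y) hd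
    (fun x₀ hx₀ => by simpa using step1 x₀ hx₀) hx
  simpa using this

theorem image_smul_set' {V W : Type} [AddCommGroup V] [Module ℝ V] [AddCommGroup W] [Module ℝ W]
    (f : V →ₗ[ℝ] W) (r : ℝ) (X : Set V) : f '' (r • X) = r • (f '' X) := by
  ext z
  constructor
  · rintro ⟨y, ⟨x, hx, rfl⟩, rfl⟩
    exact ⟨f x, ⟨x, hx, rfl⟩, (map_smul f r x).symm⟩
  · rintro ⟨y, ⟨x, hx, rfl⟩, rfl⟩
    exact ⟨r • x, ⟨x, hx, rfl⟩, map_smul f r x⟩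

end SetSmul

section TCAlg

variable {C : Type} [NonUnitalRing C] [Module ℝ C]
  [IsScalarTower ℝ C C] [SMulCommClass ℝ C C] [Bornology C]

local notation "TC" => TensorAlgebra ℝ C
local notation "ι" => TensorAlgebra.ι ℝ (M := C)

/-- Curvature element. -/
noncomputable def crv (x y : C) : TC := ι x * ι y - ι (x * y)

/-- Curvature word. -/
noncomputable def cword (l : List (C × C)) : TC := (l.map (fun p => crv p.1 p.2)).prod

theorem cword_nil : cword ([] : List (C × C)) = 1 := rfl

theorem cword_cons (p : C × C) (l : List (C × C)) :
    cword (p :: l) = crv p.1 p.2 * cword l := by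
  simp [cword]

theorem cword_append (l₁ l₂ : List (C × C)) :
    cword (l₁ ++ l₂) = cword l₁ * cword l₂ := by
  simp [cword, List.prod_append]

theorem crv_mul_iota (a b h : C) :
    crv a b * ι h = ι a * crv b h + crv a (b * h) - crv (a * b) h := by
  simp only [crv, mul_sub, sub_mul, mul_assoc]
  abel

theorem crv_smul_left (r : ℝ) (x y : C) : crv (r • x) y = r • crv x y := by
  simp only [crv, map_smul, smul_mul_assoc, smul_sub]

theorem cword_scale (β : ℝ) (l : List (C × C)) :
    cword (l.map (fun p => (β • p.1, p.2))) = β ^ l.length • cword l := by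
  induction l with
  | nil => simp [cword_nil]
  | cons p t ih =>
    rw [List.map_cons, cword_cons, cword_cons, ih, crv_smul_left, List.length_cons,
      smul_mul_smul_comm, pow_succ]
    ring_nf

theorem crv_mem_curvSet {P : Set C} {x y : C} (hx : x ∈ P) (hy : y ∈ P) :
    crv x y ∈ curvSet C P := ⟨x, hx, y, hy, rfl⟩

theorem mem_curvSet_iff {P : Set C} {w : TC} :
    w ∈ curvSet C P ↔ ∃ x ∈ P, ∃ y ∈ P, w = crv x y := Iff.rfl

theorem cword_mem_setPow {P : Set C} : ∀ (l : List (C × C)), l ≠ [] →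
    (∀ p ∈ l, p.1 ∈ P ∧ p.2 ∈ P) → cword l ∈ setPow (curvSet C P) (l.length - 1)
  | [], h, _ => absurd rfl h
  | [p], _, hl => by
    rw [cword_cons, cword_nil, mul_one]
    exact crv_mem_curvSet (hl p (by simp)).1 (hl p (by simp)).2
  | p :: q :: t, _, hl => by
    rw [cword_cons]
    have ht : cword (q :: t) ∈ setPow (curvSet C P) ((q :: t).length - 1) :=
      cword_mem_setPow (q :: t) (by simp) (fun r hr => hl r (List.mem_cons_of_mem _ hr))
    have hcrv : crv p.1 p.2 ∈ curvSet C P :=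
      crv_mem_curvSet (hl p (by simp)).1 (hl p (by simp)).2
    have := Set.mul_mem_mul hcrv ht
    rw [← setPow_succ_left] at this
    simpa using this

theorem setPow_curvSet_subset {P : Set C} (n : ℕ) :
    setPow (curvSet C P) n ⊆
      {w | ∃ l : List (C × C), l.length = n + 1 ∧ (∀ p ∈ l, p.1 ∈ P ∧ p.2 ∈ P) ∧ w = cword l} := by
  induction n with
  | zero =>
    rintro w ⟨x, hx, y, hy, rfl⟩
    exact ⟨[(x, y)], rfl, by simp [hx, hy], by rw [cword_cons, cword_nil, mul_one]; rfl⟩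
  | succ n ih =>
    rintro w ⟨w', hw', k, hk, rfl⟩
    obtain ⟨l, hlen, hl, rfl⟩ := ih hw'
    obtain ⟨x, hx, y, hy, rfl⟩ := hk
    refine ⟨l ++ [(x, y)], by simp [hlen], ?_, ?_⟩
    · intro p hp
      rcases List.mem_append.1 hp with h | h
      · exact hl p h
      · simp at h; subst h; exact ⟨hx, hy⟩
    · rw [cword_append, cword_cons, cword_nil, mul_one]; rfl

/-- The lift to the unitization. -/
noncomputable def phiC : TC →ₐ[ℝ] Unitization ℝ C :=
  TensorAlgebra.lift ℝ (Unitization.inrHom ℝ ℝ C)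

theorem tauC_eq (x : TC) : tauC C x = (phiC x).snd := rfl

theorem phiC_iota (x : C) : phiC (ι x) = (x : Unitization ℝ C) :=
  TensorAlgebra.lift_ι_apply _ _

theorem tauC_iota (x : C) : tauC C (ι x) = x := by
  rw [tauC_eq, phiC_iota, Unitization.snd_inr]

theorem phiC_crv (x y : C) : phiC (crv x y) = 0 := by
  rw [crv, map_sub, map_mul, phiC_iota, phiC_iota, phiC_iota, ← Unitization.inr_mul, sub_self]

theorem phiC_setPow_curvSet {P : Set C} (n : ℕ) {w : TC} (hw : w ∈ setPow (curvSet C P) n) :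
    phiC w = 0 := by
  induction n generalizing w with
  | zero =>
    obtain ⟨x, _, y, _, rfl⟩ := hw
    exact phiC_crv x y
  | succ n ih =>
    obtain ⟨w', hw', k, hk, rfl⟩ := hw
    obtain ⟨x, _, y, _, rfl⟩ := hk
    show phiC (w' * crv x y) = 0
    rw [map_mul, phiC_crv, mul_zero]

theorem tauC_anSet {P : Set C} {w : TC} (hw : w ∈ anSet C P) :
    tauC C w ∈ insert (0 : C) P := by
  rcases hw with ⟨x, hx, rfl⟩ | hw
  · rw [tauC_iota]; exact Set.mem_insert_of_mem _ hx
  · obtain ⟨n, hn⟩ := Set.mem_iUnion.1 hw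
    rcases hn with ⟨a, ⟨x, _, rfl⟩, b, hb, rfl⟩ | hw'
    · rw [tauC_eq, map_mul, phiC_setPow_curvSet n hb, mul_zero]
      exact Set.mem_insert _ _
    · rw [tauC_eq, phiC_setPow_curvSet n hw']
      exact Set.mem_insert _ _

theorem fst_phiC_anSet {P : Set C} {w : TC} (hw : w ∈ anSet C P) : (phiC w).fst = 0 := by
  rcases hw with ⟨x, hx, rfl⟩ | hw
  · rw [phiC_iota, Unitization.fst_inr]
  · obtain ⟨n, hn⟩ := Set.mem_iUnion.1 hw
    rcases hn with ⟨a, ⟨x, _, rfl⟩, b, hb, rfl⟩ | hw'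
    · rw [map_mul, phiC_setPow_curvSet n hb, mul_zero]; rfl
    · rw [phiC_setPow_curvSet n hw']; rfl

theorem tauC_mul_of_fst_zero {x y : TC} (hx : (phiC x).fst = 0) (hy : (phiC y).fst = 0) :
    tauC C (x * y) = tauC C x * tauC C y := by
  rw [tauC_eq, tauC_eq, tauC_eq, map_mul, Unitization.snd_mul, hx, hy]
  simp

theorem fst_phiC_mul {x y : TC} (hx : (phiC x).fst = 0) :
    (phiC (x * y)).fst = 0 := by
  rw [map_mul, Unitization.fst_mul, hx, zero_mul]

end TCAlg

section Push

variable {C : Type} [NonUnitalRing C] [Module ℝ C]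
  [IsScalarTower ℝ C C] [SMulCommClass ℝ C C] [Bornology C]

local notation "TC" => TensorAlgebra ℝ C
local notation "ι" => TensorAlgebra.ι ℝ (M := C)

/-- Headed words: `ι h · ω(x₁,y₁)⋯ω(x_L,y_L)`. -/
def HW (H X Y : Set C) (L : ℕ) : Set TC :=
  {w | ∃ (h : C) (l : List (C × C)), h ∈ H ∧ l.length = L ∧
    (∀ p ∈ l, p.1 ∈ X ∧ p.2 ∈ Y) ∧ w = ι h * cword l}

/-- Headless words: `ω(x₁,y₁)⋯ω(x_L,y_L)`, `L ≥ 1`. -/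
def CW (X Y : Set C) (L : ℕ) : Set TC :=
  {w | ∃ l : List (C × C), l.length = L ∧ 1 ≤ L ∧
    (∀ p ∈ l, p.1 ∈ X ∧ p.2 ∈ Y) ∧ w = cword l}

def WSet (X Y H : Set C) (L : ℕ) : Set TC := HW H X Y L ∪ CW X Y L

/-- Closure conditions on the pools. -/
structure PoolHyp (F B X Y H : Set C) : Prop where
  F_X : F ⊆ X
  F_Y : F ⊆ Y
  F_H : F ⊆ H
  FF_X : ∀ a ∈ F, ∀ b ∈ F, a * b ∈ X
  FF_Y : ∀ a ∈ F, ∀ b ∈ F, a * b ∈ Y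
  FF_H : ∀ a ∈ F, ∀ b ∈ F, a * b ∈ H
  H_Y : H ⊆ Y
  FH_Y : ∀ a ∈ F, ∀ h ∈ H, a * h ∈ Y
  B_X : B ⊆ X
  B_H : B ⊆ H
  BH_H : ∀ u ∈ B, ∀ h ∈ H, u * h ∈ H

theorem crv_eq_cword_single (x y : C) : crv x y = cword [(x, y)] := by
  rw [cword_cons, cword_nil, mul_one]

/-- The fundamental push lemma: moving `ι h` leftwards through a fresh curvature word. -/
theorem push_lemma {F B X Y H : Set C} (hp : PoolHyp F B X Y H) :
    ∀ (l : List (C × C)), l ≠ [] → (∀ p ∈ l, p.1 ∈ F ∧ p.2 ∈ F) → ∀ h ∈ H,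
    ∃ (a : C) (l' : List (C × C)) (z : TC), a ∈ F ∧ l'.length = l.length ∧
      (∀ p ∈ l', p.1 ∈ X ∧ p.2 ∈ Y) ∧
      z ∈ absCo (2 * l.length) (CW X Y l.length) ∧
      cword l * ι h = ι a * cword l' + z
  | [], h, _, _, _ => absurd rfl h
  | [p], _, hl, h, hh => by
    have hpF := hl p (by simp)
    refine ⟨p.1, [(p.2, h)], crv p.1 (p.2 * h) - crv (p.1 * p.2) h, hpF.1, rfl, ?_, ?_, ?_⟩
    · intro q hq
      simp only [List.mem_singleton] at hq
      subst hq
      exact ⟨hp.F_X hpF.2, hp.H_Y hh⟩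
    · have m1 : crv p.1 (p.2 * h) ∈ CW X Y 1 :=
        ⟨[(p.1, p.2 * h)], rfl, le_refl 1,
          by intro q hq; simp only [List.mem_singleton] at hq; subst hq
             exact ⟨hp.F_X hpF.1, hp.FH_Y p.2 hpF.2 h hh⟩,
          crv_eq_cword_single _ _⟩
      have m2 : crv (p.1 * p.2) h ∈ CW X Y 1 :=
        ⟨[(p.1 * p.2, h)], rfl, le_refl 1,
          by intro q hq; simp only [List.mem_singleton] at hq; subst hq
             exact ⟨hp.FF_X p.1 hpF.1 p.2 hpF.2, hp.H_Y hh⟩,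
          crv_eq_cword_single _ _⟩
      have hmem := add_mem_absCo (mem_absCo_self m1)
        (by simpa using smul_mem_absCo (-1 : ℝ) (mem_absCo_self m2))
      rw [← sub_eq_add_neg] at hmem
      simp only [List.length_singleton]
      exact absCo_mono (by norm_num) (subset_refl _) hmem
    · rw [cword_cons, cword_nil, mul_one, crv_mul_iota, cword_cons, cword_nil, mul_one]
      abel
  | p :: q :: t, _, hl, h, hh => by
    obtain ⟨a', l'', z', ha', hlen'', hl'', hz', heq⟩ :=
      push_lemma hp (q :: t) (by simp) (fun r hr => hl r (List.mem_cons_of_mem _ hr)) h hh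
    have hpF := hl p (by simp)
    refine ⟨p.1, (p.2, a') :: l'', crv p.1 (p.2 * a') * cword l''
        - crv (p.1 * p.2) a' * cword l'' + crv p.1 p.2 * z', hpF.1, by simp [hlen''], ?_, ?_, ?_⟩
    · intro r hr
      rcases List.mem_cons.1 hr with h1 | h1
      · subst h1; exact ⟨hp.F_X hpF.2, hp.F_Y ha'⟩
      · exact hl'' r h1
    · -- coefficient bookkeeping
      have L0 : (q :: t).length = t.length + 1 := rfl
      have m1 : crv p.1 (p.2 * a') * cword l'' ∈ CW X Y ((p :: q :: t).length) := by
        refine ⟨(p.1, p.2 * a') :: l'', by simp [hlen''], by simp, ?_, by rw [cword_cons]⟩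
        intro r hr
        rcases List.mem_cons.1 hr with h1 | h1
        · subst h1; exact ⟨hp.F_X hpF.1, hp.FF_Y p.2 hpF.2 a' ha'⟩
        · exact hl'' r h1
      have m2 : crv (p.1 * p.2) a' * cword l'' ∈ CW X Y ((p :: q :: t).length) := by
        refine ⟨(p.1 * p.2, a') :: l'', by simp [hlen''], by simp, ?_, by rw [cword_cons]⟩
        intro r hr
        rcases List.mem_cons.1 hr with h1 | h1
        · subst h1; exact ⟨hp.FF_X p.1 hpF.1 p.2 hpF.2, hp.F_Y ha'⟩
        · exact hl'' r h1
      have m3 : crv p.1 p.2 * z' ∈ absCo (2 * (q :: t).length * 1) (CW X Y ((p :: q :: t).length)) := by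
        apply absCo_map (LinearMap.mulLeft ℝ (crv p.1 p.2)) zero_le_one _ hz'
        intro v hv
        obtain ⟨m, hmlen, hm1, hmp, rfl⟩ := hv
        apply mem_absCo_self
        refine ⟨(p.1, p.2) :: m, by simp [hmlen], by simp, ?_, ?_⟩
        · intro r hr
          rcases List.mem_cons.1 hr with h1 | h1
          · subst h1; exact ⟨hp.F_X hpF.1, hp.F_Y hpF.2⟩
          · exact hmp r h1
        · rw [cword_cons]; rfl
      have s12 : crv p.1 (p.2 * a') * cword l'' - crv (p.1 * p.2) a' * cword l''
          ∈ absCo 2 (CW X Y ((p :: q :: t).length)) := by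
        have hmem := add_mem_absCo (mem_absCo_self m1)
          (by simpa using smul_mem_absCo (-1 : ℝ) (mem_absCo_self m2))
        rw [← sub_eq_add_neg] at hmem
        exact absCo_mono (by norm_num) (subset_refl _) hmem
      have := add_mem_absCo s12 m3
      refine absCo_mono ?_ (subset_refl _) this
      apply le_of_eq
      simp only [List.length_cons, L0]
      push_cast
      ring
    · -- the algebraic identity
      rw [cword_cons, mul_assoc, heq, mul_add, ← mul_assoc, crv_mul_iota, cword_cons,
        sub_mul, add_mul, mul_assoc]
      abel

theorem iota_mul_iota (d a : C) : ι d * ι a = crv d a + ι (d * a) := by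
  rw [crv, sub_add_cancel]

theorem cwordF_mul_WSet {F B X Y H : Set C} (hp : PoolHyp F B X Y H)
    (l : List (C × C)) (hne : l ≠ []) (hF : ∀ p ∈ l, p.1 ∈ F ∧ p.2 ∈ F)
    {L : ℕ} {w : TC} (hw : w ∈ WSet X Y H L) :
    cword l * w ∈ absCo (2 * l.length + 2)
      (WSet X Y H (L + l.length) ∪ WSet X Y H (L + l.length + 1)) := by
  rcases hw with hw | hw
  · obtain ⟨h, l₂, hh, hlen₂, hl₂, rfl⟩ := hw
    obtain ⟨a, l', z, haF, hlen', hl', hz, heq⟩ := push_lemma hp l hne hF h hh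
    have key : cword l * (ι h * cword l₂) = ι a * cword (l' ++ l₂) + z * cword l₂ := by
      rw [← mul_assoc, heq, add_mul, mul_assoc, ← cword_append]
    rw [key]
    have m1 : ι a * cword (l' ++ l₂) ∈ WSet X Y H (L + l.length) :=
      Or.inl ⟨a, l' ++ l₂, hp.F_H haF, by simp [hlen', hlen₂]; omega,
        by intro p hp'; rcases List.mem_append.1 hp' with h1 | h1
           exacts [hl' p h1, hl₂ p h1], rfl⟩
    have m2 : z * cword l₂ ∈ absCo (2 * l.length * 1) (WSet X Y H (L + l.length)) := by
      apply absCo_map (LinearMap.mulRight ℝ (cword l₂)) zero_le_one _ hz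
      intro v hv
      obtain ⟨m, hmlen, hm1, hmp, rfl⟩ := hv
      apply mem_absCo_self
      refine Or.inr ⟨m ++ l₂, by simp [hmlen, hlen₂]; omega, by omega, ?_, ?_⟩
      · intro p hp'; rcases List.mem_append.1 hp' with h1 | h1
        exacts [hmp p h1, hl₂ p h1]
      · rw [cword_append]; rfl
    have := add_mem_absCo (mem_absCo_self m1) m2
    refine absCo_mono ?_ Set.subset_union_left this
    push_cast; nlinarith [(0:ℝ) ≤ l.length]
  · obtain ⟨l₂, hlen₂, hL1, hl₂, rfl⟩ := hw
    have m1 : cword l * cword l₂ ∈ WSet X Y H (L + l.length) := by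
      refine Or.inr ⟨l ++ l₂, by simp [hlen₂]; omega, by omega, ?_, (cword_append _ _).symm⟩
      intro p hp'
      rcases List.mem_append.1 hp' with h1 | h1
      · exact ⟨hp.F_X (hF p h1).1, hp.F_Y (hF p h1).2⟩
      · exact hl₂ p h1
    refine absCo_mono ?_ (Set.subset_union_left) (mem_absCo_self m1)
    push_cast; nlinarith [(0:ℝ) ≤ l.length]

theorem iotaF_cword_mul_WSet {F B X Y H : Set C} (hp : PoolHyp F B X Y H)
    (d : C) (hd : d ∈ F)
    (l : List (C × C)) (hne : l ≠ []) (hF : ∀ p ∈ l, p.1 ∈ F ∧ p.2 ∈ F)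
    {L : ℕ} {w : TC} (hw : w ∈ WSet X Y H L) :
    (ι d * cword l) * w ∈ absCo (2 * l.length + 2)
      (WSet X Y H (L + l.length) ∪ WSet X Y H (L + l.length + 1)) := by
  rcases hw with hw | hw
  · obtain ⟨h, l₂, hh, hlen₂, hl₂, rfl⟩ := hw
    obtain ⟨a, l', z, haF, hlen', hl', hz, heq⟩ := push_lemma hp l hne hF h hh
    have key : crv d a * cword (l' ++ l₂) + ι (d * a) * cword (l' ++ l₂)
          + ι d * (z * cword l₂) = (ι d * cword l) * (ι h * cword l₂) :=
      calc crv d a * cword (l' ++ l₂) + ι (d * a) * cword (l' ++ l₂) + ι d * (z * cword l₂)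
          = (crv d a + ι (d * a)) * cword (l' ++ l₂) + ι d * (z * cword l₂) := by
            rw [add_mul]
        _ = ι d * (ι a * cword (l' ++ l₂)) + ι d * (z * cword l₂) := by
            rw [← iota_mul_iota, mul_assoc]
        _ = ι d * (ι a * (cword l' * cword l₂) + z * cword l₂) := by
            rw [mul_add, cword_append]
        _ = ι d * ((ι a * cword l' + z) * cword l₂) := by rw [add_mul, mul_assoc]
        _ = ι d * ((cword l * ι h) * cword l₂) := by rw [heq]
        _ = (ι d * cword l) * (ι h * cword l₂) := by
            rw [mul_assoc (ι d) (cword l), mul_assoc (cword l)]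
    rw [← key]
    have m1 : crv d a * cword (l' ++ l₂) ∈ WSet X Y H (L + l.length + 1) := by
      refine Or.inr ⟨(d, a) :: (l' ++ l₂), by simp [hlen', hlen₂]; omega, by omega, ?_, ?_⟩
      · intro p hp'
        rcases List.mem_cons.1 hp' with h1 | h1
        · subst h1; exact ⟨hp.F_X hd, hp.F_Y haF⟩
        · rcases List.mem_append.1 h1 with h2 | h2
          exacts [hl' p h2, hl₂ p h2]
      · rw [cword_cons]
    have m2 : ι (d * a) * cword (l' ++ l₂) ∈ WSet X Y H (L + l.length) :=
      Or.inl ⟨d * a, l' ++ l₂, hp.FF_H d hd a haF, by simp [hlen', hlen₂]; omega,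
        by intro p hp'; rcases List.mem_append.1 hp' with h1 | h1
           exacts [hl' p h1, hl₂ p h1], rfl⟩
    have m3 : ι d * (z * cword l₂) ∈ absCo (2 * l.length * 1) (WSet X Y H (L + l.length)) := by
      apply absCo_map ((LinearMap.mulLeft ℝ (ι d)).comp (LinearMap.mulRight ℝ (cword l₂)))
        zero_le_one _ hz
      intro v hv
      obtain ⟨m, hmlen, hm1, hmp, rfl⟩ := hv
      apply mem_absCo_self
      refine Or.inl ⟨d, m ++ l₂, hp.F_H hd, by simp [hmlen, hlen₂]; omega, ?_, ?_⟩
      · intro p hp'; rcases List.mem_append.1 hp' with h1 | h1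
        exacts [hmp p h1, hl₂ p h1]
      · simp [cword_append]
    have m1' := absCo_mono le_rfl
      (Set.subset_union_right (s := WSet X Y H (L + l.length))) (mem_absCo_self m1)
    have m2' := absCo_mono le_rfl
      (Set.subset_union_left (t := WSet X Y H (L + l.length + 1))) (mem_absCo_self m2)
    have m3' := absCo_mono le_rfl
      (Set.subset_union_left (t := WSet X Y H (L + l.length + 1))) m3
    have := add_mem_absCo (add_mem_absCo m1' m2') m3'
    refine absCo_mono ?_ (subset_refl _) this
    push_cast; nlinarith [(0:ℝ) ≤ l.length]
  · obtain ⟨l₂, hlen₂, hL1, hl₂, rfl⟩ := hw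
    have m1 : (ι d * cword l) * cword l₂ ∈ WSet X Y H (L + l.length) := by
      refine Or.inl ⟨d, l ++ l₂, hp.F_H hd, by simp [hlen₂]; omega, ?_, ?_⟩
      · intro p hp'
        rcases List.mem_append.1 hp' with h1 | h1
        · exact ⟨hp.F_X (hF p h1).1, hp.F_Y (hF p h1).2⟩
        · exact hl₂ p h1
      · rw [cword_append, mul_assoc]
    refine absCo_mono ?_ (Set.subset_union_left) (mem_absCo_self m1)
    push_cast; nlinarith [(0:ℝ) ≤ l.length]

theorem iotaB_mul_WSet {F B X Y H : Set C} (hp : PoolHyp F B X Y H)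
    {u : C} (hu : u ∈ B) {L : ℕ} {w : TC} (hw : w ∈ WSet X Y H L) :
    ∃ w₁ w₂ : TC, ι u * w = w₁ + w₂ ∧ w₁ ∈ WSet X Y H L ∧
      (w₂ ∈ WSet X Y H (L + 1) ∨ w₂ = 0) := by
  rcases hw with hw | hw
  · obtain ⟨h, l₂, hh, hlen₂, hl₂, rfl⟩ := hw
    refine ⟨ι (u * h) * cword l₂, cword ((u, h) :: l₂), ?_, ?_, Or.inl ?_⟩
    · rw [← mul_assoc, iota_mul_iota, add_mul, cword_cons, add_comm]
    · exact Or.inl ⟨u * h, l₂, hp.BH_H u hu h hh, hlen₂, hl₂, rfl⟩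
    · refine Or.inr ⟨(u, h) :: l₂, by simp [hlen₂], by omega, ?_, rfl⟩
      intro p hp'
      rcases List.mem_cons.1 hp' with h1 | h1
      · subst h1; exact ⟨hp.B_X hu, hp.H_Y hh⟩
      · exact hl₂ p h1
  · obtain ⟨l₂, hlen₂, hL1, hl₂, rfl⟩ := hw
    exact ⟨ι u * cword l₂, 0, by rw [add_zero],
      Or.inl ⟨u, l₂, hp.B_H hu, hlen₂, hl₂, rfl⟩, Or.inr rfl⟩

/-- Generators with at least one curvature, over the pool `F`. -/
def CG (F : Set C) : Set TC :=
  {g | ∃ l : List (C × C), l ≠ [] ∧ (∀ p ∈ l, p.1 ∈ F ∧ p.2 ∈ F) ∧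
    (g = cword l ∨ ∃ d ∈ F, g = ι d * cword l)}

/-- The weighted union of word sets. -/
def Wb (X Y H : Set C) (β : ℝ) : Set TC := ⋃ L, β^L • WSet X Y H L

theorem smul_WSet_mem_absCo {X Y H : Set C} {β : ℝ} (hβ : 1 ≤ β) {L L' : ℕ} (h : L ≤ L')
    {w : TC} (hw : w ∈ WSet X Y H L') :
    β^L • w ∈ absCo ((β⁻¹)^(L' - L)) (Wb X Y H β) := by
  have hβ0 : (0:ℝ) < β := lt_of_lt_of_le one_pos hβ
  have e : β^L • w = (β⁻¹)^(L'-L) • (β^(L') • w) := by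
    rw [smul_smul, inv_pow]
    congr 1
    have e2 : β^(L') = β^(L'-L) * β^L := by rw [← pow_add]; congr 1; omega
    rw [e2, inv_mul_cancel_left₀ (pow_ne_zero _ (ne_of_gt hβ0))]
  rw [e]
  have hmem : β^(L') • w ∈ Wb X Y H β := Set.mem_iUnion.2 ⟨L', ⟨w, hw, rfl⟩⟩
  have := smul_mem_absCo ((β⁻¹)^(L'-L)) (mem_absCo_self hmem)
  have habs : |(β⁻¹)^(L'-L)| * 1 = (β⁻¹)^(L'-L) := by
    rw [mul_one, abs_of_nonneg (pow_nonneg (inv_nonneg.2 (le_of_lt hβ0)) _)]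
  rwa [habs] at this

theorem iotaB_mul_Wb {F B X Y H : Set C} (hp : PoolHyp F B X Y H) {β : ℝ} (hβ : 1 ≤ β)
    {u : C} (hu : u ∈ B) {x : TC} (hx : x ∈ Wb X Y H β) :
    ι u * x ∈ absCo (1 + β⁻¹) (Wb X Y H β) := by
  obtain ⟨L, hL⟩ := Set.mem_iUnion.1 hx
  obtain ⟨w, hw, rfl⟩ := hL
  rw [mul_smul_comm]
  obtain ⟨w₁, w₂, heq, h1, h2⟩ := iotaB_mul_WSet hp hu hw
  rw [heq, smul_add]
  have m1 : β^L • w₁ ∈ absCo 1 (Wb X Y H β) := by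
    have := smul_WSet_mem_absCo hβ le_rfl h1
    simpa using this
  rcases h2 with h2 | h2
  · have m2 := smul_WSet_mem_absCo hβ (Nat.le_succ L) h2
    have e1 : L + 1 - L = 1 := by omega
    rw [e1, pow_one] at m2
    exact add_mem_absCo m1 m2
  · rw [h2, smul_zero, add_zero]
    refine absCo_mono ?_ (subset_refl _) m1
    have : (0:ℝ) ≤ β⁻¹ := inv_nonneg.2 (by linarith)
    linarith

theorem CG_mul_Wb {F B X Y H : Set C} (hp : PoolHyp F B X Y H) {β : ℝ} (hβ : 2 ≤ β)
    {g : TC} (hg : g ∈ CG F) {x : TC} (hx : x ∈ Wb X Y H β) :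
    g * x ∈ absCo (4 * β⁻¹) (Wb X Y H β) := by
  have hβ1 : (1:ℝ) ≤ β := by linarith
  have hβ0 : (0:ℝ) < β := by linarith
  have hinv0 : (0:ℝ) ≤ β⁻¹ := inv_nonneg.2 (le_of_lt hβ0)
  obtain ⟨l, hne, hF, hcase⟩ := hg
  obtain ⟨L, hL⟩ := Set.mem_iUnion.1 hx
  obtain ⟨w, hw, rfl⟩ := hL
  have hgw : g * w ∈ absCo (2 * l.length + 2)
      (WSet X Y H (L + l.length) ∪ WSet X Y H (L + l.length + 1)) := by
    rcases hcase with rfl | ⟨d, hd, rfl⟩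
    exacts [cwordF_mul_WSet hp l hne hF hw, iotaF_cword_mul_WSet hp d hd l hne hF hw]
  rw [mul_smul_comm]
  have key : β^L • (g * w) ∈ absCo ((2 * l.length + 2) * ((β⁻¹)^l.length)) (Wb X Y H β) := by
    have hpt : ∀ v ∈ (WSet X Y H (L + l.length) ∪ WSet X Y H (L + l.length + 1)),
        ((β^L) • (LinearMap.id : TC →ₗ[ℝ] TC)) v ∈ absCo ((β⁻¹)^l.length) (Wb X Y H β) := by
      intro v hv
      have goal1 : β^L • v ∈ absCo ((β⁻¹)^l.length) (Wb X Y H β) := by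
        rcases hv with hv | hv
        · have := smul_WSet_mem_absCo hβ1 (Nat.le_add_right L l.length) hv
          have e1 : L + l.length - L = l.length := by omega
          rwa [e1] at this
        · have := smul_WSet_mem_absCo hβ1 (by omega : L ≤ L + l.length + 1) hv
          have e1 : L + l.length + 1 - L = l.length + 1 := by omega
          rw [e1] at this
          refine absCo_mono ?_ (subset_refl _) this
          exact pow_le_pow_of_le_one hinv0 (inv_le_one_of_one_le₀ hβ1) (Nat.le_succ _)
      simpa using goal1
    have hmap := absCo_map ((β^L) • (LinearMap.id : TC →ₗ[ℝ] TC))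
      (pow_nonneg hinv0 l.length) hpt hgw
    simpa using hmap
  refine absCo_mono ?_ (subset_refl _) key
  -- numeric bound: (2m+2) β⁻ᵐ ≤ 4 β⁻¹ for m ≥ 1, β ≥ 2
  obtain ⟨k, hk⟩ : ∃ k, l.length = k + 1 := by
    cases l with
    | nil => exact absurd rfl hne
    | cons p t => exact ⟨t.length, rfl⟩
  rw [hk]
  have h2kn : k + 2 ≤ 2^(k+1) := Nat.succ_le_of_lt Nat.lt_two_pow_self
  have h2k : ((k:ℝ) + 1) + 1 ≤ 2^(k+1) := by exact_mod_cast h2kn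
  have hpowpos : (0:ℝ) < 2^k := by positivity
  have hinvle : β⁻¹ ≤ 2⁻¹ := by
    apply inv_anti₀ (by norm_num) hβ
  have hb1 : (β⁻¹)^(k+1) ≤ (2⁻¹)^k * β⁻¹ := by
    rw [pow_succ]
    apply mul_le_mul_of_nonneg_right _ hinv0
    exact pow_le_pow_left₀ hinv0 hinvle k
  have hb2 : (2*((k:ℝ)+1)+2) * ((2⁻¹)^k * β⁻¹) ≤ 4 * β⁻¹ := by
    have e1 : ((2:ℝ)⁻¹)^k = ((2:ℝ)^k)⁻¹ := by rw [inv_pow]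
    have h3 : (2*((k:ℝ)+1)+2) * ((2:ℝ)^k)⁻¹ ≤ 4 := by
      rw [mul_inv_le_iff₀ hpowpos]
      have : (2:ℝ)^(k+1) = 2 * 2^k := by rw [pow_succ]; ring
      nlinarith
    calc (2*((k:ℝ)+1)+2) * ((2⁻¹)^k * β⁻¹) = ((2*((k:ℝ)+1)+2) * ((2:ℝ)^k)⁻¹) * β⁻¹ := by
          rw [e1]; ring
      _ ≤ 4 * β⁻¹ := mul_le_mul_of_nonneg_right h3 hinv0
  push_cast
  calc (2*((k:ℝ)+1)+2) * ((β⁻¹)^(k+1))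
      ≤ (2*((k:ℝ)+1)+2) * ((2⁻¹)^k * β⁻¹) := by
        apply mul_le_mul_of_nonneg_left hb1
        positivity
    _ ≤ 4 * β⁻¹ := hb2

theorem CG_sub_absCo_Wb {F B X Y H : Set C} (hp : PoolHyp F B X Y H) {β : ℝ} (hβ : 1 ≤ β) :
    CG F ⊆ absCo 1 (Wb X Y H β) := by
  rintro g ⟨l, hne, hF, hcase⟩
  have hβ0 : (0:ℝ) < β := lt_of_lt_of_le one_pos hβ
  have hmem : g ∈ WSet X Y H l.length := by
    rcases hcase with rfl | ⟨d, hd, rfl⟩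
    · exact Or.inr ⟨l, rfl, by cases l with
        | nil => exact absurd rfl hne
        | cons p t => simp,
        fun p hp' => ⟨hp.F_X (hF p hp').1, hp.F_Y (hF p hp').2⟩, rfl⟩
    · exact Or.inl ⟨d, l, hp.F_H hd, rfl,
        fun p hp' => ⟨hp.F_X (hF p hp').1, hp.F_Y (hF p hp').2⟩, rfl⟩
  have := smul_WSet_mem_absCo (X := X) (Y := Y) (H := H) hβ (Nat.zero_le l.length) hmem
  rw [pow_zero, one_smul, Nat.sub_zero] at this
  refine absCo_mono ?_ (subset_refl _) this
  exact pow_le_one₀ (inv_nonneg.2 (le_of_lt hβ0)) (inv_le_one_of_one_le₀ hβ)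

theorem iotaB_mem_Wb {F B X Y H : Set C} (hp : PoolHyp F B X Y H) {β : ℝ}
    {u : C} (hu : u ∈ B) : ι u ∈ Wb X Y H β := by
  apply Set.mem_iUnion.2
  refine ⟨0, ?_⟩
  rw [pow_zero]
  refine ⟨ι u, Or.inl ⟨u, [], hp.B_H hu, rfl, by simp, by rw [cword_nil, mul_one]⟩, one_smul _ _⟩

theorem Wb_sub_anSet {X Y H : Set C} {β : ℝ} (P' : Set C)
    (hH : H ⊆ P') (hY : Y ⊆ P') (hXβ : ∀ x ∈ X, β • x ∈ P') :
    Wb X Y H β ⊆ anSet C P' := by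
  rintro x hx
  obtain ⟨L, hL⟩ := Set.mem_iUnion.1 hx
  obtain ⟨w, hw, rfl⟩ := hL
  rcases hw with hw | hw
  · obtain ⟨h, l, hh, hlen, hl, rfl⟩ := hw
    have e : β^L • (ι h * cword l) = ι h * cword (l.map (fun p => (β • p.1, p.2))) := by
      rw [cword_scale, hlen, mul_smul_comm]
    show β^L • (ι h * cword l) ∈ anSet C P'
    rw [e]
    rcases Nat.eq_zero_or_pos L with hL0 | hL1
    · subst hL0
      rw [List.length_eq_zero_iff] at hlen
      subst hlen
      simp only [List.map_nil, cword_nil, mul_one]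
      exact Or.inl ⟨h, hH hh, rfl⟩
    · have hlnil : l.map (fun p => (β • p.1, p.2)) ≠ [] := by
        intro hcon
        rw [List.map_eq_nil_iff] at hcon
        subst hcon
        simp at hlen; omega
      have hslots : ∀ p ∈ l.map (fun p => (β • p.1, p.2)), p.1 ∈ P' ∧ p.2 ∈ P' := by
        intro p hp'
        obtain ⟨q, hq, rfl⟩ := List.mem_map.1 hp'
        exact ⟨hXβ q.1 (hl q hq).1, hY (hl q hq).2⟩
      have hcw := cword_mem_setPow _ hlnil hslots
      have hlen2 : (l.map (fun p => (β • p.1, p.2))).length - 1 = L - 1 := by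
        rw [List.length_map, hlen]
      rw [hlen2] at hcw
      refine Or.inr (Set.mem_iUnion.2 ⟨L - 1, Or.inl ?_⟩)
      exact Set.mul_mem_mul ⟨h, hH hh, rfl⟩ hcw
  · obtain ⟨l, hlen, hL1, hl, rfl⟩ := hw
    have e : β^L • cword l = cword (l.map (fun p => (β • p.1, p.2))) := by
      rw [cword_scale, hlen]
    show β^L • cword l ∈ anSet C P'
    rw [e]
    have hlnil : l.map (fun p => (β • p.1, p.2)) ≠ [] := by
      intro hcon
      rw [List.map_eq_nil_iff] at hcon
      subst hcon
      simp at hlen; omega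
    have hslots : ∀ p ∈ l.map (fun p => (β • p.1, p.2)), p.1 ∈ P' ∧ p.2 ∈ P' := by
      intro p hp'
      obtain ⟨q, hq, rfl⟩ := List.mem_map.1 hp'
      exact ⟨hXβ q.1 (hl q hq).1, hY (hl q hq).2⟩
    have hcw := cword_mem_setPow _ hlnil hslots
    have hlen2 : (l.map (fun p => (β • p.1, p.2))).length - 1 = L - 1 := by
      rw [List.length_map, hlen]
    rw [hlen2] at hcw
    exact Or.inr (Set.mem_iUnion.2 ⟨L - 1, Or.inr hcw⟩)

theorem jmap_anSet {S₀ : Set C} :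
    ∀ w ∈ anSet C S₀, w - ι (tauC C w) ∈ absCo 1 (CG S₀) := by
  intro w hw
  rcases hw with ⟨x, hx, rfl⟩ | hw
  · rw [tauC_iota, sub_self]
    exact zero_mem_absCo zero_le_one
  · obtain ⟨n, hn⟩ := Set.mem_iUnion.1 hw
    have htau : tauC C w = 0 ∧ w ∈ CG S₀ := by
      rcases hn with ⟨a, ⟨x, hxS, rfl⟩, b, hb, rfl⟩ | hw'
      · constructor
        · rw [tauC_eq, map_mul, phiC_setPow_curvSet n hb, mul_zero]
          rfl
        · obtain ⟨l, hlen, hsl, rfl⟩ := setPow_curvSet_subset n hb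
          exact ⟨l, by intro hc; rw [hc] at hlen; simp at hlen, hsl, Or.inr ⟨x, hxS, rfl⟩⟩
      · constructor
        · rw [tauC_eq, phiC_setPow_curvSet n hw']
          rfl
        · obtain ⟨l, hlen, hsl, rfl⟩ := setPow_curvSet_subset n hw'
          exact ⟨l, by intro hc; rw [hc] at hlen; simp at hlen, hsl, Or.inl rfl⟩
    rw [htau.1, map_zero, sub_zero]
    exact mem_absCo_self htau.2

theorem hard_direction
    (hmul : ∀ S T : Set C, IsBounded S → IsBounded T → IsBounded (S * T))
    (hsm : ∀ (r : ℝ) (S : Set C), IsBounded S → IsBounded (r • S))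
    (S : Set TC) (S₀ : Set C) (c : ℝ) (hS₀b : IsBounded S₀) (hc : 0 < c)
    (hSsub : S ⊆ c • dhull (anSet C S₀)) {t t' : ℝ} (ht : 0 < t) (htt' : t < t')
    (hB : IsBounded (mulClosure (t⁻¹ • (tauC C '' S)))) :
    SmallTC C (mulClosure (t'⁻¹ • S)) := by
  have ht' : 0 < t' := lt_trans ht htt'
  set B := mulClosure (t⁻¹ • (tauC C '' S)) with hBdef
  set F := S₀ with hFdef
  set X := F ∪ F*F ∪ B with hXdef
  set H := F ∪ F*F ∪ B ∪ B*F ∪ B*(F*F) with hHdef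
  set Y := F ∪ F*F ∪ H ∪ F*H with hYdef
  have hp : PoolHyp F B X Y H := by
    refine ⟨?_, ?_, ?_, ?_, ?_, ?_, ?_, ?_, ?_, ?_, ?_⟩
    · exact fun a ha => Or.inl (Or.inl ha)
    · exact fun a ha => Or.inl (Or.inl (Or.inl ha))
    · exact fun a ha => Or.inl (Or.inl (Or.inl (Or.inl ha)))
    · exact fun a ha b hb => Or.inl (Or.inr (Set.mul_mem_mul ha hb))
    · exact fun a ha b hb => Or.inl (Or.inl (Or.inr (Set.mul_mem_mul ha hb)))
    · exact fun a ha b hb => Or.inl (Or.inl (Or.inl (Or.inr (Set.mul_mem_mul ha hb))))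
    · exact fun h hh => Or.inl (Or.inr hh)
    · exact fun a ha h hh => Or.inr (Set.mul_mem_mul ha hh)
    · exact fun u hu => Or.inr hu
    · exact fun u hu => Or.inl (Or.inl (Or.inr hu))
    · -- BH_H
      intro u hu h hh
      rcases hh with ((((hh | hh) | hh) | hh) | hh)
      · exact Or.inl (Or.inr (Set.mul_mem_mul hu hh))
      · exact Or.inr (Set.mul_mem_mul hu hh)
      · exact Or.inl (Or.inl (Or.inr (mulClosure_mul_self hu hh)))
      · obtain ⟨v, hv, f, hf, rfl⟩ := hh
        have : u * (v * f) = (u * v) * f := (mul_assoc _ _ _).symm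
        rw [this]
        exact Or.inl (Or.inr (Set.mul_mem_mul (mulClosure_mul_self hu hv) hf))
      · obtain ⟨v, hv, f, hf, rfl⟩ := hh
        have : u * (v * f) = (u * v) * f := (mul_assoc _ _ _).symm
        rw [this]
        exact Or.inr (Set.mul_mem_mul (mulClosure_mul_self hu hv) hf)
  set c₁ := c / t with hc₁def
  have hc₁ : 0 < c₁ := div_pos hc ht
  set β := max 2 ((1 + 4*c₁) * t' / (t' - t)) with hβdef
  have hβ2 : (2:ℝ) ≤ β := le_max_left _ _
  have hβ1 : (1:ℝ) ≤ β := by linarith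
  have hβ0 : (0:ℝ) < β := by linarith
  set q := 1 + (1 + 4*c₁) * β⁻¹ with hqdef
  have hqpos : 0 < q := by
    have : 0 ≤ (1 + 4*c₁) * β⁻¹ := by positivity
    rw [hqdef]; linarith
  have hqt : q * (t/t') ≤ 1 := by
    have htt0 : 0 < t' - t := by linarith
    have hA : 0 < (1 + 4*c₁) * t' / (t' - t) := by positivity
    have hβA : (1 + 4*c₁) * t' / (t' - t) ≤ β := le_max_right _ _
    have h1 : β⁻¹ ≤ ((1 + 4*c₁) * t' / (t' - t))⁻¹ := by
      apply inv_anti₀ hA hβA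
    have h2 : (1 + 4*c₁) * β⁻¹ ≤ (t' - t)/t' := by
      have h3 : (1 + 4*c₁) * ((1 + 4*c₁) * t' / (t' - t))⁻¹ = (t' - t)/t' := by
        field_simp
      calc (1 + 4*c₁) * β⁻¹ ≤ (1 + 4*c₁) * ((1 + 4*c₁) * t' / (t' - t))⁻¹ :=
            mul_le_mul_of_nonneg_left h1 (by positivity)
        _ = (t' - t)/t' := h3
    have h4 : (t' - t)/t' ≤ (t' - t)/t :=
      div_le_div_of_nonneg_left (by linarith) ht (le_of_lt htt')
    have h5 : q ≤ t'/t := by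
      rw [hqdef]
      have : 1 + (t' - t)/t = t'/t := by field_simp; ring
      linarith
    calc q * (t/t') ≤ (t'/t) * (t/t') := by
          apply mul_le_mul_of_nonneg_right h5 (le_of_lt (div_pos ht ht'))
      _ = 1 := by field_simp
  -- decomposition of factors
  have hdecomp : ∀ f ∈ t⁻¹ • S, ∃ u j, u ∈ B ∧ j ∈ absCo c₁ (CG F) ∧ f = ι u + j := by
    rintro f ⟨s, hs, rfl⟩
    refine ⟨tauC C (t⁻¹ • s), (t⁻¹ • s) - ι (tauC C (t⁻¹ • s)), ?_, ?_, by abel⟩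
    · apply subset_mulClosure
      exact ⟨tauC C s, ⟨s, hs, rfl⟩, (map_smul (tauC C) t⁻¹ s).symm⟩
    · have hs1 : s ∈ absCo c (anSet C S₀) := by
        obtain ⟨d, hd, rfl⟩ := hSsub hs
        have h1 := smul_mem_absCo c (dhull_subset_absCo _ hd)
        simpa [abs_of_pos hc] using h1
      have hs2 : t⁻¹ • s ∈ absCo c₁ (anSet C S₀) := by
        have h1 := smul_mem_absCo t⁻¹ hs1
        have e : |t⁻¹| * c = c₁ := by
          rw [abs_of_pos (inv_pos.2 ht), hc₁def]
          field_simp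
        rwa [e] at h1
      have hpt : ∀ w ∈ anSet C S₀,
          ((LinearMap.id - ((TensorAlgebra.ι ℝ : C →ₗ[ℝ] TC) ∘ₗ tauC C)) : TC →ₗ[ℝ] TC) w
            ∈ absCo 1 (CG S₀) := by
        intro w hw
        simpa using jmap_anSet w hw
      have hmain := absCo_map ((LinearMap.id - ((TensorAlgebra.ι ℝ : C →ₗ[ℝ] TC) ∘ₗ tauC C)) : TC →ₗ[ℝ] TC)
        zero_le_one hpt hs2
      have e2 : ((LinearMap.id - ((TensorAlgebra.ι ℝ : C →ₗ[ℝ] TC) ∘ₗ tauC C)) : TC →ₗ[ℝ] TC) (t⁻¹ • s)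
          = t⁻¹ • s - ι (tauC C (t⁻¹ • s)) := by
        simp [LinearMap.sub_apply, LinearMap.comp_apply, smul_sub]
      rw [e2, mul_one] at hmain
      exact hmain
  -- main induction
  have hinvstep : ∀ n, setPow (t⁻¹ • S) n ⊆ absCo ((1 + c₁) * q^n) (Wb X Y H β) := by
    intro n
    induction n with
    | zero =>
      intro f hf
      obtain ⟨u, j, hu, hj, rfl⟩ := hdecomp f hf
      have m1 : ι u ∈ absCo 1 (Wb X Y H β) := mem_absCo_self (iotaB_mem_Wb hp hu)
      have m2 : j ∈ absCo (c₁ * 1) (Wb X Y H β) :=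
        absCo_trans zero_le_one (CG_sub_absCo_Wb hp hβ1) hj
      have := add_mem_absCo m1 m2
      refine absCo_mono (le_of_eq ?_) (subset_refl _) this
      rw [pow_zero]; ring
    | succ n ih =>
      intro x hx
      rw [setPow_succ_left] at hx
      obtain ⟨f, hf, y, hy, rfl⟩ := hx
      obtain ⟨u, j, hu, hj, rfl⟩ := hdecomp f hf
      have hyW := ih hy
      show (ι u + j) * y ∈ absCo ((1 + c₁) * q ^ (n + 1)) (Wb X Y H β)
      have heqm : (ι u + j) * y = ι u * y + j * y := add_mul _ _ _
      rw [heqm]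
      have m1 : ι u * y ∈ absCo (((1+c₁)*q^n) * (1+β⁻¹)) (Wb X Y H β) := by
        apply absCo_map (LinearMap.mulLeft ℝ (ι u)) (by positivity) _ hyW
        intro v hv
        simpa using iotaB_mul_Wb hp hβ1 hu hv
      have m2 : j * y ∈ absCo ((c₁ * ((1+c₁)*q^n)) * (4*β⁻¹)) (Wb X Y H β) := by
        have hmul2 := absCo_mul hj hyW
        apply absCo_trans (by positivity) _ hmul2
        rintro z ⟨g, hg, x', hx', rfl⟩
        exact CG_mul_Wb hp hβ2 hg hx'
      have := add_mem_absCo m1 m2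
      refine absCo_mono (le_of_eq ?_) (subset_refl _) this
      rw [pow_succ, hqdef]
      ring
  -- conclude: mulClosure is small
  have hcontain : mulClosure (t'⁻¹ • S) ⊆ absCo (1 + c₁) (Wb X Y H β) := by
    intro x hx
    obtain ⟨n, hn⟩ := Set.mem_iUnion.1 hx
    have e0 : (t/t') * t⁻¹ = t'⁻¹ := by field_simp
    have e : t'⁻¹ • S = (t/t') • (t⁻¹ • S) := by rw [smul_smul_set, e0]
    rw [e, setPow_smul_set] at hn
    obtain ⟨y, hy, rfl⟩ := hn
    have hmem := smul_mem_absCo ((t/t')^(n+1)) (hinvstep n hy)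
    refine absCo_mono ?_ (subset_refl _) hmem
    have hr0 : 0 < t/t' := div_pos ht ht'
    have hr1 : t/t' ≤ 1 := (div_le_one ht').2 (le_of_lt htt')
    rw [abs_of_pos (pow_pos hr0 _)]
    have key : (t/t')^(n+1) * ((1+c₁)*q^n) = (1+c₁) * ((t/t') * (q*(t/t'))^n) := by
      rw [pow_succ, mul_pow]
      ring
    rw [key]
    have h1 : (q*(t/t'))^n ≤ 1 := pow_le_one₀ (by positivity) hqt
    have h2 : (t/t') * (q*(t/t'))^n ≤ 1 := by
      calc (t/t') * (q*(t/t'))^n ≤ 1 * 1 := by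
            apply mul_le_mul hr1 h1 (by positivity) (by norm_num)
        _ = 1 := by norm_num
    calc (1+c₁) * ((t/t') * (q*(t/t'))^n) ≤ (1+c₁) * 1 :=
          mul_le_mul_of_nonneg_left h2 (by positivity)
      _ = 1 + c₁ := mul_one _
  -- final witness
  set P' := insert (0:C) (H ∪ Y ∪ β • X) with hP'def
  have hWbsub : Wb X Y H β ⊆ anSet C P' := by
    apply Wb_sub_anSet
    · exact fun a ha => Set.mem_insert_of_mem _ (Or.inl (Or.inl ha))
    · exact fun a ha => Set.mem_insert_of_mem _ (Or.inl (Or.inr ha))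
    · exact fun a ha => Set.mem_insert_of_mem _ (Or.inr ⟨a, ha, rfl⟩)
  have h0an : (0:TC) ∈ anSet C P' := Or.inl ⟨0, Set.mem_insert _ _, map_zero _⟩
  have hFb : IsBounded F := hS₀b
  have hHb : IsBounded H := by
    apply IsBounded.union
    apply IsBounded.union
    apply IsBounded.union
    apply IsBounded.union
    exacts [hFb, hmul _ _ hFb hFb, hB, hmul _ _ hB hFb, hmul _ _ hB (hmul _ _ hFb hFb)]
  have hXb : IsBounded X := by
    apply IsBounded.union
    apply IsBounded.union
    exacts [hFb, hmul _ _ hFb hFb, hB]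
  have hYb : IsBounded Y := by
    apply IsBounded.union
    apply IsBounded.union
    apply IsBounded.union
    exacts [hFb, hmul _ _ hFb hFb, hHb, hmul _ _ hFb hHb]
  have hP'b : IsBounded P' := by
    rw [hP'def]
    apply IsBounded.insert
    apply IsBounded.union
    apply IsBounded.union
    exacts [hHb, hYb, hsm β X hXb]
  refine ⟨P', 1 + c₁, hP'b, by positivity, ?_⟩
  calc mulClosure (t'⁻¹ • S) ⊆ absCo (1 + c₁) (Wb X Y H β) := hcontain
    _ ⊆ absCo (1 + c₁) (anSet C P') := absCo_mono le_rfl hWbsub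
    _ ⊆ (1 + c₁) • dhull (anSet C P') := absCo_subset_smul_dhull (by positivity) h0an

theorem list_sum_zero {W : Type} [AddCommGroup W] [Module ℝ W] :
    ∀ (l : List (ℝ × W)), (∀ p ∈ l, p.2 = (0:W)) →
      (l.map (fun p => p.1 • p.2)).sum = 0 := by
  intro l hl
  induction l with
  | nil => simp
  | cons q t ih =>
    rw [List.map_cons, List.sum_cons, hl q (by simp), smul_zero, zero_add]
    exact ih (fun p hp => hl p (List.mem_cons_of_mem _ hp))

theorem absCo_zero_set {W : Type} [AddCommGroup W] [Module ℝ W] {c : ℝ} {x : W}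
    (hx : x ∈ absCo c ({0} : Set W)) : x = 0 := by
  obtain ⟨l, h1, _, rfl⟩ := hx
  exact list_sum_zero l (fun p hp => h1 p hp)

theorem fst_phiC_small {S : Set TC} {S₀ : Set C} {c : ℝ}
    (hSsub : S ⊆ c • dhull (anSet C S₀)) : ∀ s ∈ S, (phiC (C := C) s).fst = 0 := by
  intro s hs
  obtain ⟨d, hd, rfl⟩ := hSsub hs
  set Fm : TC →ₗ[ℝ] ℝ :=
    ((Unitization.fstHom ℝ C).toLinearMap).comp (phiC (C := C)).toLinearMap with hFm
  have hFmw : ∀ w : TC, Fm w = (phiC (C := C) w).fst := fun w => rfl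
  have hd1 : d ∈ absCo 1 (anSet C S₀) := dhull_subset_absCo _ hd
  have h0 : Fm d ∈ absCo 1 ({0} : Set ℝ) := by
    have hpt : ∀ w ∈ anSet C S₀, Fm w ∈ absCo 1 ({0} : Set ℝ) := by
      intro w hw
      rw [hFmw, fst_phiC_anSet hw]
      exact mem_absCo_self rfl
    have := absCo_map Fm zero_le_one hpt hd1
    simpa using this
  have hFd : Fm d = 0 := absCo_zero_set h0
  show (phiC (C := C) (c • d)).fst = 0
  have : Fm (c • d) = 0 := by rw [map_smul, hFd, smul_zero]
  rwa [hFmw] at this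

theorem easy_direction
    (hhull : ∀ S : Set C, IsBounded S → IsBounded (dhull S))
    (hsm : ∀ (r : ℝ) (S : Set C), IsBounded S → IsBounded (r • S))
    (S : Set TC) {S₀ : Set C} {c : ℝ} (hSsub : S ⊆ c • dhull (anSet C S₀))
    {t : ℝ} (ht : 0 < t) {S₂ : Set C} {c₂ : ℝ} (hb₂ : IsBounded S₂)
    (hsub₂ : mulClosure (t⁻¹ • S) ⊆ c₂ • dhull (anSet C S₂)) :
    IsBounded (mulClosure (t⁻¹ • (tauC C '' S))) := by
  have hfst : ∀ s ∈ S, (phiC (C := C) s).fst = 0 := fst_phiC_small hSsub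
  -- every element of the τ-side power set is the image of a fst-zero element
  have hstep : ∀ n, ∀ y ∈ setPow (t⁻¹ • (tauC C '' S)) n,
      ∃ x ∈ setPow (t⁻¹ • S) n, (phiC (C := C) x).fst = 0 ∧ tauC C x = y := by
    intro n
    induction n with
    | zero =>
      rintro y ⟨z, ⟨s, hs, rfl⟩, rfl⟩
      refine ⟨t⁻¹ • s, ⟨s, hs, rfl⟩, ?_, ?_⟩
      · have : (phiC (C := C) (t⁻¹ • s)).fst = t⁻¹ • (phiC (C := C) s).fst := by
          rw [map_smul]; rfl
        rw [this, hfst s hs, smul_zero]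
      · exact map_smul (tauC C) t⁻¹ s
    | succ n ih =>
      rintro y ⟨y', hy', y₀, hy₀, rfl⟩
      obtain ⟨x', hx', hf', ht'⟩ := ih y' hy'
      obtain ⟨x₀, hx₀, hf₀, ht₀⟩ : ∃ x ∈ setPow (t⁻¹ • S) 0,
          (phiC (C := C) x).fst = 0 ∧ tauC C x = y₀ := by
        obtain ⟨z, ⟨s, hs, rfl⟩, rfl⟩ := hy₀
        refine ⟨t⁻¹ • s, ⟨s, hs, rfl⟩, ?_, map_smul (tauC C) t⁻¹ s⟩
        have : (phiC (C := C) (t⁻¹ • s)).fst = t⁻¹ • (phiC (C := C) s).fst := by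
          rw [map_smul]; rfl
        rw [this, hfst s hs, smul_zero]
      refine ⟨x' * x₀, Set.mul_mem_mul hx' hx₀, fst_phiC_mul hf', ?_⟩
      rw [tauC_mul_of_fst_zero hf' hf₀, ht', ht₀]
  have himg : mulClosure (t⁻¹ • (tauC C '' S)) ⊆ tauC C '' (mulClosure (t⁻¹ • S)) := by
    intro y hy
    obtain ⟨n, hn⟩ := Set.mem_iUnion.1 hy
    obtain ⟨x, hx, _, htx⟩ := hstep n y hn
    exact ⟨x, Set.mem_iUnion.2 ⟨n, hx⟩, htx⟩
  have himg2 : tauC C '' (mulClosure (t⁻¹ • S)) ⊆ c₂ • absCo 1 (insert (0:C) S₂) := by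
    intro y hy
    obtain ⟨x, hx, rfl⟩ := hy
    obtain ⟨d, hd, rfl⟩ := hsub₂ hx
    refine ⟨tauC C d, ?_, (map_smul (tauC C) c₂ d).symm⟩
    have hd1 : d ∈ absCo 1 (anSet C S₂) := dhull_subset_absCo _ hd
    have := absCo_map (tauC C) zero_le_one
      (fun w hw => mem_absCo_self (tauC_anSet hw)) hd1
    simpa using this
  have hfin : mulClosure (t⁻¹ • (tauC C '' S)) ⊆ c₂ • dhull (insert (0:C) S₂) := by
    intro y hy
    obtain ⟨z, hz, rfl⟩ := himg2 (himg hy)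
    exact ⟨z, absCo_one_subset_dhull (Set.mem_insert _ _) hz, rfl⟩
  exact IsBounded.subset (hsm c₂ _ (hhull _ (hb₂.insert 0))) hfin

end Push

theorem stmt16
    (hsep : SeparatedBorn C)
    (hmul : ∀ S T : Set C, IsBounded S → IsBounded T → IsBounded (S * T))
    (hsm : ∀ (r : ℝ) (S : Set C), IsBounded S → IsBounded (r • S))
    (hhull : ∀ S : Set C, IsBounded S → IsBounded (dhull S))
    (S : Set (TensorAlgebra ℝ C)) (hS : SmallTC C S) :
    specRadP (Bornology.IsBounded (α := C)) (tauC C '' S) = specRadP (SmallTC C) S := by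
  obtain ⟨S₀, c, hS₀b, hc, hSsub⟩ := hS
  apply le_antisymm
  · -- bounded side ≤ SmallTC side
    apply sInf_le_sInf
    rintro r ⟨t, ht, hr, hsmall⟩
    obtain ⟨S₂, c₂, hb₂, hc₂, hsub₂⟩ := hsmall
    exact ⟨t, ht, hr, easy_direction hhull hsm S hSsub ht hb₂ hsub₂⟩
  · -- SmallTC side ≤ bounded side
    apply le_sInf
    rintro r ⟨t, ht, rfl, hbdd⟩
    have key : ∀ t' : ℝ, t < t' → ENNReal.ofReal t' ∈
        {r : ℝ≥0∞ | ∃ u : ℝ, 0 < u ∧ r = ENNReal.ofReal u ∧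
          SmallTC C (mulClosure (u⁻¹ • S))} := by
      intro t' ht'
      exact ⟨t', lt_trans ht ht', rfl,
        hard_direction hmul hsm S S₀ c hS₀b hc hSsub ht ht' hbdd⟩
    apply ENNReal.le_of_forall_pos_le_add
    intro ε hε _
    have hmem := key (t + (ε:ℝ)/2) (by
      have hε' : (0:ℝ) < (ε:ℝ) := NNReal.coe_pos.2 hε
      linarith)
    calc sInf {r : ℝ≥0∞ | ∃ u : ℝ, 0 < u ∧ r = ENNReal.ofReal u ∧
          SmallTC C (mulClosure (u⁻¹ • S))} ≤ ENNReal.ofReal (t + (ε:ℝ)/2) := sInf_le hmem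
      _ ≤ ENNReal.ofReal t + ε := by
          rw [ENNReal.ofReal_add (le_of_lt ht) (by positivity)]
          apply add_le_add le_rfl
          calc ENNReal.ofReal ((ε:ℝ)/2) ≤ ENNReal.ofReal (ε:ℝ) := by
                apply ENNReal.ofReal_le_ofReal
                have : (0:ℝ) ≤ (ε:ℝ) := ε.2
                linarith
            _ = (ε : ℝ≥0∞) := ENNReal.ofReal_coe_nnreal
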